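/- Let X = [−1, 1] ⊆ ℝ and let F(x) = −1 if x < 0 and F(x) = 1 if x ≥ 0 (the sign function). For δ > 0 define φ_δ : [−1, 1] → [−1, 1] by φ_δ(x) = 1 if x < −2δ, φ_δ(x) = −(x + δ)/δ if −2δ ≤ x ≤ 0, and φ_δ(x) = −1 if x > 0; each φ_δ is continuous and maps [−1, 1] into [−1, 1]. Then for every Borel probability measure μ on [−1, 1] and every ε with 0 ≤ ε < 1, there exists δ > 0 such that ∫ F(x) · (φ_δ(x) − x) dμ(x) < −ε. Consequently, with Φ = {φ_δ : δ > 0}, the Φ-EVI problem for F admits no ε-approximate solution for any ε < 1, even though every member of Φ is continuous and F is piecewise constant. -/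

import Mathlib

open MeasureTheory Filter Topology

/-- **Continuous deviations do not guarantee approximate Φ-EVI solutions**
(Theorem `continuous-counterexample`): on `X = [−1,1]` with `F = sgn` and the family of
continuous maps `φ_δ` (for `δ > 0`) defined below, every `φ_δ` is continuous on `[−1,1]`
and maps `[−1,1]` into itself, yet for every Borel probability measure `μ` concentrated on
`[−1,1]` and every `0 ≤ ε < 1` there exists `δ > 0` with
`∫ F(x)(φ_δ(x) − x) dμ(x) < −ε`; hence the `Φ`-EVI problem with `Φ = {φ_δ : δ > 0}`
admits no `ε`-approximate solution for any `ε < 1`. -/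
theorem continuous_deviations_counterexample (F : ℝ → ℝ)
    (hF : ∀ x, F x = if x < 0 then -1 else 1)
    (φ : ℝ → ℝ → ℝ)
    (hφ : ∀ δ : ℝ, 0 < δ → ∀ x : ℝ,
      φ δ x = if x < -(2*δ) then 1 else if x ≤ 0 then -(x + δ)/δ else -1) :
    (∀ δ : ℝ, 0 < δ →
      ContinuousOn (φ δ) (Set.Icc (-1 : ℝ) 1) ∧
      Set.MapsTo (φ δ) (Set.Icc (-1 : ℝ) 1) (Set.Icc (-1 : ℝ) 1)) ∧
    ∀ (μ : Measure ℝ), IsProbabilityMeasure μ → μ (Set.Icc (-1 : ℝ) 1)ᶜ = 0 →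
      ∀ ε : ℝ, 0 ≤ ε → ε < 1 →
        ∃ δ : ℝ, 0 < δ ∧ (∫ x, F x * (φ δ x - x) ∂μ) < -ε := by
  have hφeq : ∀ δ : ℝ, 0 < δ → ∀ x, φ δ x = max (-1) (min 1 (-(x + δ)/δ)) := by
    intro δ hδ x
    rw [hφ δ hδ x]
    split_ifs with h1 h2
    · have h : (1:ℝ) ≤ -(x+δ)/δ := by rw [le_div_iff₀ hδ]; linarith
      rw [min_eq_left h]; norm_num
    · have hub : -(x+δ)/δ ≤ 1 := by rw [div_le_one hδ]; linarith
      have hlb : (-1:ℝ) ≤ -(x+δ)/δ := by rw [le_div_iff₀ hδ]; linarith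
      rw [min_eq_right hub, max_eq_right hlb]
    · have h : -(x+δ)/δ ≤ -1 := by rw [div_le_iff₀ hδ]; linarith
      rw [min_eq_right (h.trans (by norm_num)), max_eq_left h]
  have hFabs : ∀ x, |F x| = 1 := by intro x; rw [hF]; split_ifs <;> norm_num
  have hφbd : ∀ δ : ℝ, 0 < δ → ∀ x, -1 ≤ φ δ x ∧ φ δ x ≤ 1 := by
    intro δ hδ x
    rw [hφeq δ hδ x]
    exact ⟨le_max_left _ _, max_le (by norm_num) (min_le_left _ _)⟩
  constructor
  · intro δ hδ
    constructor
    · apply ContinuousOn.congr (f := fun x => max (-1) (min 1 (-(x + δ)/δ)))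
      · exact (Continuous.continuousOn (by fun_prop))
      · intro x _; exact hφeq δ hδ x
    · intro x _
      exact ⟨(hφbd δ hδ x).1, (hφbd δ hδ x).2⟩
  · intro μ hprob hnull ε hε0 hε1
    have hae : ∀ᵐ x ∂μ, x ∈ Set.Icc (-1:ℝ) 1 := by
      rw [ae_iff]; exact hnull
    set g : ℝ → ℝ := fun x => if x < 0 then x - 1 else -1 - x with hg
    set f : ℕ → ℝ → ℝ := fun n x => F x * (φ (1/(n+1)) x - x) with hf
    have hδn : ∀ n : ℕ, (0:ℝ) < 1/((n:ℝ)+1) := fun n => by positivity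
    have hmeas : ∀ n, AEStronglyMeasurable (f n) μ := by
      intro n
      have he : f n = fun x => (if x < 0 then (-1:ℝ) else 1) *
          (max (-1) (min 1 (-(x + 1/((n:ℝ)+1))/(1/((n:ℝ)+1)))) - x) := by
        funext x
        show F x * (φ (1/((n:ℝ)+1)) x - x) = _
        rw [hF x, hφeq _ (hδn n) x]
      rw [he]
      apply Measurable.aestronglyMeasurable
      apply Measurable.mul
      · exact Measurable.ite measurableSet_Iio measurable_const measurable_const
      · fun_prop
    have hgmeas : AEStronglyMeasurable g μ := by
      apply Measurable.aestronglyMeasurable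
      exact Measurable.ite measurableSet_Iio (by fun_prop) (by fun_prop)
    have hbound : ∀ n, ∀ᵐ x ∂μ, ‖f n x‖ ≤ 2 := by
      intro n
      filter_upwards [hae] with x hx
      have h1 := hφbd _ (hδn n) x
      show ‖F x * (φ (1/((n:ℝ)+1)) x - x)‖ ≤ 2
      rw [Real.norm_eq_abs, abs_mul, hFabs x, one_mul, abs_le]
      constructor <;> linarith [hx.1, hx.2, h1.1, h1.2]
    have hlim : ∀ᵐ x ∂μ, Tendsto (fun n => f n x) atTop (𝓝 (g x)) := by
      refine ae_of_all _ fun x => ?_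
      rcases lt_trichotomy x 0 with hx | hx | hx
      · have hev : ∀ᶠ n in atTop, f n x = x - 1 := by
          have ht : Tendsto (fun n : ℕ => 1/((n:ℝ)+1)) atTop (𝓝 0) :=
            tendsto_one_div_add_atTop_nhds_zero_nat
          have hlt : ∀ᶠ n : ℕ in atTop, 1/((n:ℝ)+1) < -x/2 :=
            ht.eventually_lt_const (by linarith)
          filter_upwards [hlt] with n hn
          have h2 : x < -(2 * (1/((n:ℝ)+1))) := by linarith
          show F x * (φ (1/((n:ℝ)+1)) x - x) = x - 1
          rw [hφ _ (hδn n) x, if_pos h2, hF x, if_pos hx]; ring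
        have hgx : g x = x - 1 := by rw [hg]; simp only; rw [if_pos hx]
        rw [hgx]
        exact Tendsto.congr' (by filter_upwards [hev] with n hn; exact hn.symm)
          tendsto_const_nhds
      · subst hx
        have hfx : ∀ n : ℕ, f n 0 = -1 := by
          intro n
          show F 0 * (φ (1/((n:ℝ)+1)) 0 - 0) = -1
          rw [hφ _ (hδn n) 0, if_neg (by nlinarith [hδn n]), if_pos le_rfl, hF 0,
            if_neg (lt_irrefl 0)]
          field_simp
          ring
        have hgx : g 0 = -1 := by rw [hg]; simp
        rw [hgx]
        exact Tendsto.congr (fun n => (hfx n).symm) tendsto_const_nhds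
      · have hfx : ∀ n : ℕ, f n x = -1 - x := by
          intro n
          show F x * (φ (1/((n:ℝ)+1)) x - x) = -1 - x
          rw [hφ _ (hδn n) x, if_neg (by nlinarith [hδn n]), if_neg (not_le.2 hx), hF x,
            if_neg (not_lt.2 hx.le)]
          ring
        have hgx : g x = -1 - x := by rw [hg]; simp only; rw [if_neg (not_lt.2 hx.le)]
        rw [hgx]
        exact Tendsto.congr (fun n => (hfx n).symm) tendsto_const_nhds
      
    have hgint : Integrable g μ := by
      refine Integrable.mono' (integrable_const 2) hgmeas ?_
      filter_upwards [hae] with x hx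
      rw [hg]; simp only [Real.norm_eq_abs]
      split_ifs with h <;> rw [abs_le] <;> constructor <;> linarith [hx.1, hx.2]
    have hgle : ∫ x, g x ∂μ ≤ -1 := by
      have h := integral_mono hgint (integrable_const (-1 : ℝ)) (fun x => by
        rw [hg]; dsimp only; split_ifs with h <;> linarith)
      simpa using h
    have htend : Tendsto (fun n => ∫ x, f n x ∂μ) atTop (𝓝 (∫ x, g x ∂μ)) :=
      tendsto_integral_of_dominated_convergence (fun _ => 2) hmeas (integrable_const 2)
        hbound hlim
    obtain ⟨n, hn⟩ := (htend.eventually_lt_const (by linarith : ∫ x, g x ∂μ < -ε)).exists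
    exact ⟨1/((n:ℝ)+1), hδn n, hn⟩
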